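/- (Vanishing criterion for Weyl-type tensors in dimension 4.) Let V be a 4-dimensional real inner product space and let W be an algebraic curvature tensor on V that is totally trace-free, i.e., Σ_{i=1}^4 W(X, e_i, e_i, Y) = 0 for all X, Y and every orthonormal basis (e_i). If there exists a nonzero vector v ∈ V such that W(X, Y, Z, v) = 0 for all X, Y, Z ∈ V, then W = 0. -/

import Mathlib

open scoped InnerProductSpace

set_option maxHeartbeats 1600000 in
/-- Vanishing criterion for Weyl-type tensors in dimension 4: a totally trace-free
algebraic curvature tensor on a 4-dimensional real inner product space which is
annihilated by some nonzero vector vanishes identically. -/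
theorem stmt_9 {V : Type*} [NormedAddCommGroup V] [InnerProductSpace ℝ V]
    [FiniteDimensional ℝ V] (hdim : Module.finrank ℝ V = 4)
    (W : V →ₗ[ℝ] V →ₗ[ℝ] V →ₗ[ℝ] V →ₗ[ℝ] ℝ)
    (hW1 : ∀ X Y Z T, W X Y Z T = - W Y X Z T)
    (hW2 : ∀ X Y Z T, W X Y Z T = - W X Y T Z)
    (hW3 : ∀ X Y Z T, W X Y Z T = W Z T X Y)
    (hBianchi : ∀ X Y Z T, W X Y Z T + W Y Z X T + W Z X Y T = 0)
    (hTraceFree : ∀ (e : OrthonormalBasis (Fin 4) ℝ V) (X Y : V),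
      ∑ i, W X (e i) (e i) Y = 0)
    (v : V) (hv : v ≠ 0) (hWv : ∀ X Y Z, W X Y Z v = 0) :
    ∀ X Y Z T, W X Y Z T = 0 := by
  -- orthonormal basis with last vector parallel to v
  obtain ⟨e, he⟩ : ∃ e : OrthonormalBasis (Fin 4) ℝ V, e 3 = ‖v‖⁻¹ • v := by
    have hcard : Module.finrank ℝ V = Fintype.card (Fin 4) := by simpa using hdim
    have horth : Orthonormal ℝ (({3} : Set (Fin 4)).restrict (fun _ : Fin 4 => ‖v‖⁻¹ • v)) := by
      constructor
      · rintro ⟨i, hi⟩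
        exact (by simp [norm_smul, norm_inv, inv_mul_cancel₀ (norm_ne_zero_iff.mpr hv)] : ‖‖v‖⁻¹ • v‖ = 1)
      · rintro ⟨i, hi⟩ ⟨j, hj⟩ hij
        exact absurd (Subtype.ext (hi.trans hj.symm)) hij
    obtain ⟨e, he⟩ := horth.exists_orthonormalBasis_extension_of_card_eq hcard
    exact ⟨e, he 3 rfl⟩
  -- vanishing when e 3 is in any slot
  have hlast : ∀ X Y Z, W X Y Z (e 3) = 0 := by
    intro X Y Z; rw [he, map_smul, hWv]; simp
  have h3Z : ∀ X Y T, W X Y (e 3) T = 0 := by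
    intro X Y T; rw [hW2]; rw [hlast]; ring
  have h3X : ∀ Y Z T, W (e 3) Y Z T = 0 := by
    intro Y Z T; rw [hW3]; exact h3Z _ _ _
  have h3Y : ∀ X Z T, W X (e 3) Z T = 0 := by
    intro X Z T; rw [hW1]; rw [h3X]; ring
  -- degenerate slots
  have hXX : ∀ X Z T, W X X Z T = 0 := by
    intro X Z T; have := hW1 X X Z T; linarith
  have hZZ : ∀ X Y Z, W X Y Z Z = 0 := by
    intro X Y Z; have := hW2 X Y Z Z; linarith
  -- trace over 0,1,2
  have htr : ∀ a b : Fin 4, W (e a) (e 0) (e 0) (e b) + W (e a) (e 1) (e 1) (e b)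
      + W (e a) (e 2) (e 2) (e b) = 0 := by
    intro a b
    have h := hTraceFree e (e a) (e b)
    rw [Fin.sum_univ_four] at h
    have h3 := h3Y (e a) (e 3) (e b)
    linarith
  -- the six sectional-type values vanish
  have hA : W (e 0) (e 1) (e 0) (e 1) = 0 := by
    linarith [htr 0 0, htr 1 1, htr 2 2, hXX (e 0) (e 0) (e 0), hXX (e 1) (e 1) (e 1),
      hXX (e 2) (e 2) (e 2), hW2 (e 0) (e 1) (e 1) (e 0), hW2 (e 0) (e 2) (e 2) (e 0),
      hW1 (e 1) (e 0) (e 0) (e 1), hW2 (e 1) (e 2) (e 2) (e 1), hW1 (e 2) (e 0) (e 0) (e 2),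
      hW1 (e 2) (e 1) (e 1) (e 2), hW2 (e 1) (e 2) (e 1) (e 2), hW2 (e 0) (e 2) (e 1) (e 2),
      hW2 (e 2) (e 1) (e 2) (e 1)]
  have hB : W (e 0) (e 2) (e 0) (e 2) = 0 := by
    linarith [htr 0 0, htr 1 1, htr 2 2, hXX (e 0) (e 0) (e 0), hXX (e 1) (e 1) (e 1),
      hXX (e 2) (e 2) (e 2), hW2 (e 0) (e 1) (e 1) (e 0), hW2 (e 0) (e 2) (e 2) (e 0),
      hW1 (e 1) (e 0) (e 0) (e 1), hW2 (e 1) (e 2) (e 2) (e 1), hW1 (e 2) (e 0) (e 0) (e 2),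
      hW1 (e 2) (e 1) (e 1) (e 2), hW2 (e 1) (e 0) (e 1) (e 0), hW1 (e 1) (e 0) (e 1) (e 0),
      hW1 (e 2) (e 1) (e 2) (e 1), hW2 (e 2) (e 1) (e 2) (e 1)]
  have hC : W (e 1) (e 2) (e 1) (e 2) = 0 := by
    linarith [htr 0 0, htr 1 1, htr 2 2, hXX (e 0) (e 0) (e 0), hXX (e 1) (e 1) (e 1),
      hXX (e 2) (e 2) (e 2), hW2 (e 0) (e 1) (e 1) (e 0), hW2 (e 0) (e 2) (e 2) (e 0),
      hW1 (e 1) (e 0) (e 0) (e 1), hW2 (e 1) (e 2) (e 2) (e 1), hW1 (e 2) (e 0) (e 0) (e 2),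
      hW1 (e 2) (e 1) (e 1) (e 2), hB, hA]
  -- off-diagonal trace identities
  have ht1 : W (e 0) (e 2) (e 2) (e 1) = 0 := by
    linarith [htr 0 1, hXX (e 0) (e 0) (e 1), hZZ (e 0) (e 1) (e 1)]
  have ht2 : W (e 0) (e 1) (e 1) (e 2) = 0 := by
    linarith [htr 0 2, hXX (e 0) (e 0) (e 2), hZZ (e 0) (e 2) (e 2)]
  have ht3 : W (e 1) (e 0) (e 0) (e 2) = 0 := by
    linarith [htr 1 2, hXX (e 1) (e 1) (e 2), hZZ (e 1) (e 2) (e 2)]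
  -- the nine canonical pair values all vanish
  have q1 : W (e 0) (e 1) (e 0) (e 1) = 0 := hA
  have q2 : W (e 0) (e 1) (e 0) (e 2) = 0 := by
    linarith [hW1 (e 0) (e 1) (e 0) (e 2), ht3]
  have q3 : W (e 0) (e 1) (e 1) (e 2) = 0 := ht2
  have q4 : W (e 0) (e 2) (e 0) (e 1) = 0 := by
    linarith [hW3 (e 0) (e 2) (e 0) (e 1), q2]
  have q5 : W (e 0) (e 2) (e 0) (e 2) = 0 := hB
  have q6 : W (e 0) (e 2) (e 1) (e 2) = 0 := by
    linarith [hW2 (e 0) (e 2) (e 1) (e 2), ht1]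
  have q7 : W (e 1) (e 2) (e 0) (e 1) = 0 := by
    linarith [hW3 (e 1) (e 2) (e 0) (e 1), q3]
  have q8 : W (e 1) (e 2) (e 0) (e 2) = 0 := by
    linarith [hW3 (e 1) (e 2) (e 0) (e 2), q6]
  have q9 : W (e 1) (e 2) (e 1) (e 2) = 0 := hC
  -- case analysis helper
  have hfin : ∀ k : Fin 4, k = 0 ∨ k = 1 ∨ k = 2 ∨ k = 3 := by decide
  -- row lemmas
  have hp01 : ∀ k l : Fin 4, W (e 0) (e 1) (e k) (e l) = 0 := by
    intro k l
    rcases hfin k with rfl | rfl | rfl | rfl <;> rcases hfin l with rfl | rfl | rfl | rfl <;>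
      first
      | exact hZZ _ _ _
      | exact hlast _ _ _
      | exact h3Z _ _ _
      | linarith [q1, q2, q3, hW2 (e 0) (e 1) (e 1) (e 0), hW2 (e 0) (e 1) (e 2) (e 0),
          hW2 (e 0) (e 1) (e 2) (e 1)]
  have hp02 : ∀ k l : Fin 4, W (e 0) (e 2) (e k) (e l) = 0 := by
    intro k l
    rcases hfin k with rfl | rfl | rfl | rfl <;> rcases hfin l with rfl | rfl | rfl | rfl <;>
      first
      | exact hZZ _ _ _
      | exact hlast _ _ _
      | exact h3Z _ _ _
      | linarith [q4, q5, q6, hW2 (e 0) (e 2) (e 1) (e 0), hW2 (e 0) (e 2) (e 2) (e 0),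
          hW2 (e 0) (e 2) (e 2) (e 1)]
  have hp12 : ∀ k l : Fin 4, W (e 1) (e 2) (e k) (e l) = 0 := by
    intro k l
    rcases hfin k with rfl | rfl | rfl | rfl <;> rcases hfin l with rfl | rfl | rfl | rfl <;>
      first
      | exact hZZ _ _ _
      | exact hlast _ _ _
      | exact h3Z _ _ _
      | linarith [q7, q8, q9, hW2 (e 1) (e 2) (e 1) (e 0), hW2 (e 1) (e 2) (e 2) (e 0),
          hW2 (e 1) (e 2) (e 2) (e 1)]
  -- all components vanish
  have hcomp : ∀ i j k l : Fin 4, W (e i) (e j) (e k) (e l) = 0 := by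
    intro i j k l
    rcases hfin i with rfl | rfl | rfl | rfl <;> rcases hfin j with rfl | rfl | rfl | rfl <;>
      first
      | exact hXX _ _ _
      | exact h3X _ _ _
      | exact h3Y _ _ _
      | exact hp01 k l
      | exact hp02 k l
      | exact hp12 k l
      | linarith [hW1 (e 0) (e 1) (e k) (e l), hp01 k l]
      | linarith [hW1 (e 0) (e 2) (e k) (e l), hp02 k l]
      | linarith [hW1 (e 1) (e 2) (e k) (e l), hp12 k l]
  -- conclude by multilinearity
  have hW0 : W = 0 := by
    refine e.toBasis.ext fun i => e.toBasis.ext fun j => e.toBasis.ext fun k =>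
      e.toBasis.ext fun l => ?_
    simp [OrthonormalBasis.coe_toBasis, hcomp]
  intro X Y Z T
  rw [hW0]
  simp
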